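/- For d ≥ 2, let C be a pure d-dimensional 1-decomposable complex that is fully coned with respect to H with |H| ≥ d−2. Let e = {a,b} be a non-edge of skel(C) whose addition creates a new (d+1)-clique in skel(C)+e. Let D be the complex generated by the facets of C together with all (d+1)-cliques of skel(C)+e containing e. Then e is a shedding face of D, del_e(D) = C, and D is 1-decomposable and fully coned with respect to H with skel(D) = skel(C)+e. -/

import Mathlib

open Finset

variable {V : Type*} [DecidableEq V]

/-- A simplicial complex: a finite collection of finite faces closed under subsets. -/
def IsComplex (C : Finset (Finset V)) : Prop :=
  ∀ F ∈ C, ∀ G, G ⊆ F → G ∈ C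

/-- `F` is a facet (maximal face) of `C`. -/
def IsFacet (C : Finset (Finset V)) (F : Finset V) : Prop :=
  F ∈ C ∧ ∀ G ∈ C, F ⊆ G → F = G

/-- `C` is pure of dimension `d`: all facets have cardinality `d+1`. -/
def IsPure (C : Finset (Finset V)) (d : ℕ) : Prop :=
  ∀ F, IsFacet C F → F.card = d + 1

/-- The deletion of a face `F`: all faces not containing `F`. -/
def del (C : Finset (Finset V)) (F : Finset V) : Finset (Finset V) :=
  C.filter (fun G => ¬ F ⊆ G)

/-- The link of a face `F`. -/
def lk (C : Finset (Finset V)) (F : Finset V) : Finset (Finset V) :=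
  C.filter (fun G => G ∩ F = ∅ ∧ G ∪ F ∈ C)

/-- The simplicial complex generated by a collection of faces. -/
def gen (S : Finset (Finset V)) : Finset (Finset V) :=
  S.biUnion Finset.powerset

/-- `C` is a (full) simplex. -/
def IsSimplexCx (C : Finset (Finset V)) : Prop :=
  ∃ F : Finset V, C = F.powerset

/-- `F` is a shedding face of the pure `d`-dimensional complex `C`. -/
def Shedding (C : Finset (Finset V)) (d : ℕ) (F : Finset V) : Prop :=
  F ∈ C ∧ IsPure (del C F) d

/-- `k`-decomposability (Provan–Billera): a simplex, or there is a shedding face `F`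
with `dim F ≤ k` whose deletion and link are again `k`-decomposable. -/
inductive Decomp : ℕ → Finset (Finset V) → Prop
  | simplex (k : ℕ) (C : Finset (Finset V)) : IsSimplexCx C → Decomp k C
  | shed (k : ℕ) (C : Finset (Finset V)) (F : Finset V) (d : ℕ) :
      F ∈ C → F.Nonempty → F.card ≤ k + 1 → IsPure C d → IsPure (del C F) d →
      Decomp k (del C F) → Decomp k (lk C F) → Decomp k C

/-- The 1-dimensional skeleton of a complex, as a simple graph. -/
def skel (C : Finset (Finset V)) : SimpleGraph V where
  Adj x y := x ≠ y ∧ ({x, y} : Finset V) ∈ C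
  symm := by
    constructor
    rintro x y ⟨hxy, hm⟩
    exact ⟨hxy.symm, by rwa [Finset.pair_comm]⟩
  loopless := ⟨fun x h => h.1 rfl⟩

/-- A shelling of a pure `d`-dimensional complex: an ordering of the facets such that
each facet meets the union of the previous ones in a pure `(d-1)`-dimensional complex. -/
def IsShelling (C : Finset (Finset V)) (d : ℕ) (L : List (Finset V)) : Prop :=
  L.Nodup ∧ (∀ F, IsFacet C F ↔ F ∈ L) ∧
  ∀ i : ℕ, 1 ≤ i → ∀ h : i < L.length,
    IsPure (gen (L.take i).toFinset ∩ (L.get ⟨i, h⟩).powerset) (d - 1)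

open scoped Classical in
/-- `full^d(G)`: the pure `d`-dimensional complex generated by all `(d+1)`-cliques of `G`. -/
noncomputable def fullC [Fintype V] (d : ℕ) (G : SimpleGraph V) : Finset (Finset V) :=
  gen ((Finset.univ.powerset).filter fun s => G.IsClique (↑s : Set V) ∧ s.card = d + 1)

open scoped Classical in
/-- All `(d+1)`-cliques of `G` containing the set `e`. -/
noncomputable def cliquesWith [Fintype V] (d : ℕ) (G : SimpleGraph V) (e : Finset V) :
    Finset (Finset V) :=
  (Finset.univ.powerset).filter fun s => G.IsClique (↑s : Set V) ∧ s.card = d + 1 ∧ e ⊆ s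

/-- `G^H`: join every vertex of `H` to every other vertex. -/
def coneGraph (G : SimpleGraph V) (H : Finset V) : SimpleGraph V where
  Adj x y := x ≠ y ∧ (G.Adj x y ∨ x ∈ H ∨ y ∈ H)
  symm := by
    constructor
    rintro x y ⟨hxy, h⟩
    refine ⟨hxy.symm, ?_⟩
    rcases h with h | h | h
    · exact Or.inl (G.adj_symm h)
    · exact Or.inr (Or.inr h)
    · exact Or.inr (Or.inl h)
  loopless := ⟨fun x h => h.1 rfl⟩

/-- The graph `G` together with the extra edge `ab`. -/
def addEdge (G : SimpleGraph V) (a b : V) : SimpleGraph V :=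
  G ⊔ SimpleGraph.fromEdgeSet {s(a, b)}

/-- `C` is fully coned with respect to `H`: every vertex of `H` is adjacent to every other
vertex of `skel C`, and every `(d+1)`-clique of `skel C` is a facet of `C`. -/
def FullyConed (C : Finset (Finset V)) (d : ℕ) (H : Finset V) : Prop :=
  (∀ h ∈ H, ∀ v : V, ({v} : Finset V) ∈ C → v ≠ h → (skel C).Adj h v) ∧
  (∀ s : Finset V, (skel C).IsClique (↑s : Set V) → s.card = d + 1 → IsFacet C s)


/-- Auxiliary lemmas -/

lemma mem_gen {S : Finset (Finset V)} {F : Finset V} : F ∈ gen S ↔ ∃ s ∈ S, F ⊆ s := by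
  simp [gen]

lemma exists_facet (C : Finset (Finset V)) {F : Finset V} (hF : F ∈ C) :
    ∃ G, IsFacet C G ∧ F ⊆ G := by
  obtain ⟨G, hG, hmax⟩ :=
    (C.filter (fun G => F ⊆ G)).exists_max_image Finset.card ⟨F, by simp [hF]⟩
  rw [Finset.mem_filter] at hG
  refine ⟨G, ⟨hG.1, ?_⟩, hG.2⟩
  intro G' hG' hsub
  exact Finset.eq_of_subset_of_card_le hsub
    (hmax G' (Finset.mem_filter.mpr ⟨hG', hG.2.trans hsub⟩))

lemma clique_extend {G : SimpleGraph V} {N H : Finset V} {k : ℕ}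
    (huniv : ∀ h ∈ H, ∀ v ∈ N, v ≠ h → G.Adj h v) (hHN : H ⊆ N)
    (hH : k ≤ H.card) (hN : k + 1 ≤ N.card) :
    ∀ t ⊆ N, G.IsClique (↑t : Set V) → t.card ≤ k + 1 →
      ∃ t', t ⊆ t' ∧ t' ⊆ N ∧ G.IsClique (↑t' : Set V) ∧ t'.card = k + 1 := by
  suffices h : ∀ m : ℕ, ∀ t ⊆ N, G.IsClique (↑t : Set V) → t.card ≤ k + 1 →
      k + 1 - t.card ≤ m →
      ∃ t', t ⊆ t' ∧ t' ⊆ N ∧ G.IsClique (↑t' : Set V) ∧ t'.card = k + 1 by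
    intro t ht hcl hcard
    exact h _ t ht hcl hcard le_rfl
  intro m
  induction m with
  | zero =>
    intro t ht hcl hcard hm
    exact ⟨t, subset_rfl, ht, hcl, by omega⟩
  | succ m ih =>
    intro t ht hcl hcard hm
    by_cases hdone : t.card = k + 1
    · exact ⟨t, subset_rfl, ht, hcl, hdone⟩
    · have hlt : t.card ≤ k := by omega
      obtain ⟨v, hvN, hvt, hadj⟩ :
          ∃ v, v ∈ N ∧ v ∉ t ∧ ∀ u ∈ t, u ≠ v → G.Adj v u := by
        by_cases hHt : H ⊆ t
        · have htH : t = H := by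
            apply (Finset.eq_of_subset_of_card_le hHt ?_).symm
            omega
          have hns : ¬ N ⊆ t := by
            intro hsub
            have := Finset.card_le_card hsub
            omega
          obtain ⟨v, hvN, hvt⟩ := Finset.not_subset.mp hns
          refine ⟨v, hvN, hvt, ?_⟩
          intro u hu hne
          exact (huniv u (htH ▸ hu) v hvN (fun h => hvt (h ▸ hu))).symm
        · obtain ⟨v, hvH, hvt⟩ := Finset.not_subset.mp hHt
          refine ⟨v, hHN hvH, hvt, ?_⟩
          intro u hu hne
          exact huniv v hvH u (ht hu) hne
      have hcl' : G.IsClique (↑(insert v t) : Set V) := by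
        rw [Finset.coe_insert]
        exact hcl.insert (fun u hu hne => hadj u hu hne.symm)
      have hcard' : (insert v t).card = t.card + 1 := Finset.card_insert_of_notMem hvt
      obtain ⟨t', h1, h2, h3, h4⟩ := ih (insert v t)
        (Finset.insert_subset hvN ht) hcl' (by omega) (by omega)
      exact ⟨t', (Finset.subset_insert v t).trans h1, h2, h3, h4⟩

open scoped Classical in
/-- The complex of all cliques of `G` inside `N` of cardinality at most `k+1`. -/
noncomputable def trunc (G : SimpleGraph V) (N : Finset V) (k : ℕ) : Finset (Finset V) :=
  N.powerset.filter fun t => G.IsClique (↑t : Set V) ∧ t.card ≤ k + 1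

lemma mem_trunc {G : SimpleGraph V} {N : Finset V} {k : ℕ} {t : Finset V} :
    t ∈ trunc G N k ↔ t ⊆ N ∧ G.IsClique (↑t : Set V) ∧ t.card ≤ k + 1 := by
  classical
  simp [trunc]

lemma pure_trunc {G : SimpleGraph V} {N H : Finset V} {k : ℕ}
    (huniv : ∀ h ∈ H, ∀ v ∈ N, v ≠ h → G.Adj h v) (hHN : H ⊆ N)
    (hH : k ≤ H.card) (hN : k + 1 ≤ N.card) :
    IsPure (trunc G N k) k := by
  intro F hF
  obtain ⟨hFN, hFcl, hFcard⟩ := mem_trunc.mp hF.1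
  obtain ⟨t', htt', ht'N, ht'cl, ht'card⟩ :=
    clique_extend huniv hHN hH hN F hFN hFcl hFcard
  rw [hF.2 t' (mem_trunc.mpr ⟨ht'N, ht'cl, le_of_eq ht'card⟩) htt']
  exact ht'card

lemma decomp_trunc {G : SimpleGraph V} :
    ∀ n : ℕ, ∀ (N H : Finset V) (k : ℕ), N.card ≤ n →
    (∀ h ∈ H, ∀ v ∈ N, v ≠ h → G.Adj h v) → H ⊆ N → k ≤ H.card → k + 1 ≤ N.card →
    Decomp 1 (trunc G N k) := by
  classical
  intro n
  induction n with
  | zero =>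
    intro N H k hn _ _ _ hN
    exact absurd (hN.trans hn) (by omega)
  | succ n ih =>
    intro N H k hn huniv hHN hH hN
    by_cases hcase : N.card = k + 1
    · -- `N` is itself a clique and the complex is a simplex
      obtain ⟨t', _, h2, h3, h4⟩ := clique_extend huniv hHN hH hN ∅
        (Finset.empty_subset N) (by simp) (by simp)
      have hNt : t' = N := Finset.eq_of_subset_of_card_le h2 (by omega)
      apply Decomp.simplex
      refine ⟨N, ?_⟩
      ext t
      rw [mem_trunc, Finset.mem_powerset]
      constructor
      · exact fun h => h.1
      · intro h
        exact ⟨h, (hNt ▸ h3).subset (Finset.coe_subset.mpr h),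
          (Finset.card_le_card h).trans (le_of_eq hcase)⟩
    · have hNk2 : k + 2 ≤ N.card := by omega
      set H' := N.filter (fun h => ∀ v ∈ N, v ≠ h → G.Adj h v) with hH'def
      have hHH' : H ⊆ H' := fun h hh => Finset.mem_filter.mpr ⟨hHN hh, huniv h hh⟩
      have hH'univ : ∀ h ∈ H', ∀ v ∈ N, v ≠ h → G.Adj h v :=
        fun h hh => (Finset.mem_filter.mp hh).2
      have hH'N : H' ⊆ N := Finset.filter_subset _ _
      have hH'card : k ≤ H'.card := hH.trans (Finset.card_le_card hHH')
      obtain ⟨v, hvN, hvcard⟩ : ∃ v ∈ N, k ≤ (H'.erase v).card := by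
        by_cases hfull : N ⊆ H'
        · obtain ⟨v, hv⟩ : N.Nonempty := Finset.card_pos.mp (by omega)
          refine ⟨v, hv, ?_⟩
          rw [Finset.card_erase_of_mem (hfull hv)]
          have := Finset.card_le_card hfull
          omega
        · obtain ⟨v, hvN, hvH'⟩ := Finset.not_subset.mp hfull
          exact ⟨v, hvN, by rw [Finset.erase_eq_of_notMem hvH']; exact hH'card⟩
      set Hv := H'.erase v with hHvdef
      have hHv_univ : ∀ h ∈ Hv, ∀ w ∈ N, w ≠ h → G.Adj h w :=
        fun h hh => hH'univ h (Finset.mem_of_mem_erase hh)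
      have hHvNe : Hv ⊆ N.erase v := fun h hh =>
        Finset.mem_erase.mpr ⟨(Finset.mem_erase.mp hh).1, hH'N (Finset.mem_of_mem_erase hh)⟩
      have hNe_card : k + 1 ≤ (N.erase v).card := by
        rw [Finset.card_erase_of_mem hvN]; omega
      have hHvNe_univ : ∀ h ∈ Hv, ∀ w ∈ N.erase v, w ≠ h → G.Adj h w :=
        fun h hh w hw => hHv_univ h hh w (Finset.mem_of_mem_erase hw)
      have hdel : del (trunc G N k) {v} = trunc G (N.erase v) k := by
        ext t
        simp only [del, Finset.mem_filter, mem_trunc, Finset.singleton_subset_iff,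
          Finset.subset_erase]
        tauto
      have hdelP : IsPure (del (trunc G N k) {v}) k := by
        rw [hdel]
        exact pure_trunc hHvNe_univ hHvNe hvcard hNe_card
      have hdelD : Decomp 1 (del (trunc G N k) {v}) := by
        rw [hdel]
        refine ih (N.erase v) Hv k ?_ hHvNe_univ hHvNe hvcard hNe_card
        rw [Finset.card_erase_of_mem hvN]; omega
      set N' := (N.erase v).filter (G.Adj v) with hN'def
      have hN'sub : N' ⊆ N.erase v := Finset.filter_subset _ _
      have hvN' : v ∉ N' := fun h => (Finset.mem_erase.mp (hN'sub h)).1 rfl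
      have hHvN' : Hv ⊆ N' := by
        intro h hh
        refine Finset.mem_filter.mpr ⟨hHvNe hh, ?_⟩
        exact (hHv_univ h hh v hvN (fun he => (Finset.mem_erase.mp hh).1 he.symm)).symm
      have hlkD : Decomp 1 (lk (trunc G N k) {v}) := by
        have hinter : ∀ t : Finset V, t ∩ {v} = ∅ ↔ v ∉ t := by
          intro t
          simp [Finset.eq_empty_iff_forall_notMem, Finset.mem_inter]
        rcases Nat.eq_zero_or_pos k with hk0 | hk1
        · apply Decomp.simplex
          refine ⟨∅, ?_⟩
          ext t
          simp only [lk, Finset.mem_filter, mem_trunc, Finset.powerset_empty,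
            Finset.mem_singleton, hinter]
          constructor
          · rintro ⟨⟨-, -, hcard⟩, hvt, ⟨-, -, hcard2⟩⟩
            have hvm : v ∈ t ∪ {v} := by simp
            have : (t ∪ {v}).card = t.card + 1 := by
              rw [Finset.union_comm, ← Finset.insert_eq, Finset.card_insert_of_notMem hvt]
            rw [Finset.eq_empty_iff_forall_notMem]
            intro x hx
            have : t.card = 0 := by omega
            simp [Finset.card_eq_zero.mp this] at hx
          · rintro rfl
            refine ⟨⟨Finset.empty_subset _, by simp, by simp⟩, by simp, ?_⟩
            refine ⟨?_, ?_, ?_⟩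
            · simp [Finset.singleton_subset_iff, hvN]
            · simp
            · simp
        · have hlk : lk (trunc G N k) {v} = trunc G N' (k - 1) := by
            ext t
            simp only [lk, Finset.mem_filter, mem_trunc, hinter]
            constructor
            · rintro ⟨⟨htN, htcl, htcard⟩, hvt, ⟨hunN, huncl, huncard⟩⟩
              have hcv : (t ∪ {v}).card = t.card + 1 := by
                rw [Finset.union_comm, ← Finset.insert_eq, Finset.card_insert_of_notMem hvt]
              refine ⟨?_, htcl, by omega⟩
              intro u hu
              refine Finset.mem_filter.mpr ⟨Finset.mem_erase.mpr ⟨?_, htN hu⟩, ?_⟩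
              · exact fun he => hvt (he ▸ hu)
              · refine (huncl ?_ ?_ ?_).symm
                · exact Finset.mem_coe.mpr (Finset.mem_union_left _ hu)
                · exact Finset.mem_coe.mpr (Finset.mem_union_right _ (Finset.mem_singleton_self v))
                · exact fun he => hvt (he ▸ hu)
            · rintro ⟨htN', htcl, htcard⟩
              have htN : t ⊆ N := fun u hu =>
                Finset.mem_of_mem_erase (hN'sub (htN' hu))
              have hvt : v ∉ t := fun h => hvN' (htN' h)
              have hcv : (t ∪ {v}).card = t.card + 1 := by
                rw [Finset.union_comm, ← Finset.insert_eq, Finset.card_insert_of_notMem hvt]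
              refine ⟨⟨htN, htcl, by omega⟩, hvt, ?_, ?_, by omega⟩
              · exact Finset.union_subset htN (Finset.singleton_subset_iff.mpr hvN)
              · rw [Finset.union_comm, ← Finset.insert_eq, Finset.coe_insert]
                refine htcl.insert ?_
                intro u hu hne
                exact (Finset.mem_filter.mp (htN' hu)).2
          rw [hlk]
          refine ih N' Hv (k - 1) ?_ ?_ hHvN' (by omega) ?_
          · have := Finset.card_le_card hN'sub
            rw [Finset.card_erase_of_mem hvN] at this
            omega
          · intro h hh w hw hne
            exact hHv_univ h hh w (Finset.mem_of_mem_erase (hN'sub hw)) hne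
          · have := Finset.card_le_card hHvN'
            omega
      have hvL : ({v} : Finset V) ∈ trunc G N k := by
        refine mem_trunc.mpr ⟨Finset.singleton_subset_iff.mpr hvN, by simp, by simp⟩
      exact Decomp.shed 1 (trunc G N k) {v} k hvL (Finset.singleton_nonempty v)
        (by simp) (pure_trunc hH'univ hH'N hH'card (by omega)) hdelP hdelD hlkD

/-- Adding all `(d+1)`-cliques through a triangle-completing missing edge `e = {a,b}`
to a fully coned 1-decomposable complex yields a 1-decomposable fully coned complex `D`
with `e` as shedding face, `del_e D = C`, and skeleton `skel(C) + e`. -/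
theorem fully_coned_missing_edge_extend [Fintype V] (C : Finset (Finset V)) (d : ℕ)
    (H : Finset V) (a b : V) (hd : 2 ≤ d)
    (hC : IsComplex C) (hP : IsPure C d) (hD : Decomp 1 C)
    (hfc : FullyConed C d H) (hH : d - 2 ≤ H.card)
    (hab : a ≠ b) (hnot : ¬ (skel C).Adj a b)
    (hclique : ∃ s : Finset V, (addEdge (skel C) a b).IsClique (↑s : Set V) ∧
      s.card = d + 1 ∧ a ∈ s ∧ b ∈ s) :
    Shedding (C ∪ gen (cliquesWith d (addEdge (skel C) a b) {a, b})) d {a, b} ∧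
    del (C ∪ gen (cliquesWith d (addEdge (skel C) a b) {a, b})) {a, b} = C ∧
    Decomp 1 (C ∪ gen (cliquesWith d (addEdge (skel C) a b) {a, b})) ∧
    IsPure (C ∪ gen (cliquesWith d (addEdge (skel C) a b) {a, b})) d ∧
    FullyConed (C ∪ gen (cliquesWith d (addEdge (skel C) a b) {a, b})) d H ∧
    ∀ x y : V, (skel (C ∪ gen (cliquesWith d (addEdge (skel C) a b) {a, b}))).Adj x y ↔
      (addEdge (skel C) a b).Adj x y := by
  classical
  obtain ⟨s₀, hs₀cl, hs₀card, has₀, hbs₀⟩ := hclique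
  set G' := addEdge (skel C) a b with hG'def
  set K := cliquesWith d G' {a, b} with hKdef
  set D := C ∪ gen K with hDdef
  have hGadj : ∀ x y : V, G'.Adj x y ↔
      (skel C).Adj x y ∨ ((x = a ∧ y = b) ∨ (x = b ∧ y = a)) := by
    intro x y
    rw [hG'def]
    unfold addEdge
    rw [SimpleGraph.sup_adj, SimpleGraph.fromEdgeSet_adj]
    simp only [Set.mem_singleton_iff, Sym2.eq_iff]
    constructor
    · rintro (h | ⟨h, -⟩)
      · exact Or.inl h
      · exact Or.inr h
    · rintro (h | h)
      · exact Or.inl h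
      · refine Or.inr ⟨h, ?_⟩
        rcases h with ⟨rfl, rfl⟩ | ⟨rfl, rfl⟩
        · exact hab
        · exact hab.symm
  have hmemK : ∀ s : Finset V, s ∈ K ↔
      G'.IsClique (↑s : Set V) ∧ s.card = d + 1 ∧ ({a, b} : Finset V) ⊆ s := by
    intro s
    rw [hKdef]
    unfold cliquesWith
    simp only [Finset.mem_filter, Finset.mem_powerset, Finset.subset_univ, true_and]
  have hmemD : ∀ F : Finset V, F ∈ D ↔ F ∈ C ∨ ∃ s ∈ K, F ⊆ s := by
    intro F
    rw [hDdef, Finset.mem_union, mem_gen]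
  have heab : ({a, b} : Finset V) ⊆ s₀ :=
    Finset.insert_subset has₀ (Finset.singleton_subset_iff.mpr hbs₀)
  have hs₀K : s₀ ∈ K := (hmemK s₀).mpr ⟨hs₀cl, hs₀card, heab⟩
  have hKpair : ∀ s ∈ K, ∀ x ∈ s, ∀ y ∈ s, x ≠ y →
      ¬((x = a ∧ y = b) ∨ (x = b ∧ y = a)) → ({x, y} : Finset V) ∈ C := by
    intro s hs x hx y hy hxy hne
    have hcl := ((hmemK s).mp hs).1
    have hadj := hcl (Finset.mem_coe.mpr hx) (Finset.mem_coe.mpr hy) hxy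
    rcases (hGadj x y).mp hadj with h | h
    · exact h.2
    · exact absurd h hne
  have hKvert : ∀ s ∈ K, ∀ v ∈ s, ({v} : Finset V) ∈ C := by
    intro s hs v hv
    obtain ⟨hcl, hcard, hsub⟩ := (hmemK s).mp hs
    have hex : ∃ w ∈ s, v ≠ w ∧ ¬((v = a ∧ w = b) ∨ (v = b ∧ w = a)) := by
      by_cases hvab : v = a ∨ v = b
      · obtain ⟨w, hw⟩ : (s \ {a, b}).Nonempty := by
          rw [← Finset.card_pos, Finset.card_sdiff_of_subset hsub, Finset.card_pair hab, hcard]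
          omega
        rw [Finset.mem_sdiff, Finset.mem_insert, Finset.mem_singleton] at hw
        push_neg at hw
        refine ⟨w, hw.1, ?_, ?_⟩
        · rintro rfl
          rcases hvab with rfl | rfl
          · exact hw.2.1 rfl
          · exact hw.2.2 rfl
        · rintro (⟨-, h2⟩ | ⟨-, h2⟩)
          · exact hw.2.2 h2
          · exact hw.2.1 h2
      · push_neg at hvab
        refine ⟨a, hsub (Finset.mem_insert_self _ _), hvab.1, ?_⟩
        rintro (⟨h1, -⟩ | ⟨h1, -⟩)
        · exact hvab.1 h1
        · exact hvab.2 h1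
    obtain ⟨w, hw, hvw, hpair⟩ := hex
    exact hC _ (hKpair s hs v hv w hw hvw hpair) {v}
      (Finset.singleton_subset_iff.mpr (Finset.mem_insert_self v {w}))
  have haC : ({a} : Finset V) ∈ C := hKvert s₀ hs₀K a has₀
  have hbC : ({b} : Finset V) ∈ C := hKvert s₀ hs₀K b hbs₀
  have hemptyC : (∅ : Finset V) ∈ C := hC _ haC ∅ (Finset.empty_subset _)
  have haH : a ∉ H := fun h => hnot (hfc.1 a h b hbC hab.symm)
  have hbH : b ∉ H := fun h => hnot ((hfc.1 b h a haC hab).symm)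
  have hHvert : ∀ h ∈ H, ({h} : Finset V) ∈ C := by
    intro h hh
    have hha : h ≠ a := fun he => haH (he ▸ hh)
    have := hfc.1 h hh a haC (fun he => hha he.symm)
    exact hC _ this.2 {h} (Finset.singleton_subset_iff.mpr (Finset.mem_insert_self _ _))
  have hCnoe : ∀ F ∈ C, ¬ ({a, b} : Finset V) ⊆ F :=
    fun F hF hsub => hnot ⟨hab, hC F hF _ hsub⟩
  -- Every small enough clique of `skel C` on vertices of `C` is a face of `C`.
  have hclaim : ∀ t : Finset V, (skel C).IsClique (↑t : Set V) →
      (∀ v ∈ t, ({v} : Finset V) ∈ C) → t.card ≤ d + 1 → t ∈ C := by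
    intro t htcl htv htcard
    set u := t ∪ H with hudef
    have huvert : ∀ v ∈ u, ({v} : Finset V) ∈ C := by
      intro v hv
      rcases Finset.mem_union.mp hv with h | h
      · exact htv v h
      · exact hHvert v h
    have hucl : (skel C).IsClique (↑u : Set V) := by
      intro x hx y hy hxy
      rw [Finset.mem_coe] at hx hy
      rcases Finset.mem_union.mp hx with hxt | hxH
      · rcases Finset.mem_union.mp hy with hyt | hyH
        · exact htcl (Finset.mem_coe.mpr hxt) (Finset.mem_coe.mpr hyt) hxy
        · exact (hfc.1 y hyH x (huvert x hx) hxy).symm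
      · exact hfc.1 x hxH y (huvert y hy) (fun he => hxy he.symm)
    by_cases hbig : d + 1 ≤ u.card
    · obtain ⟨w, htw, hwu, hwcard⟩ := Finset.exists_subsuperset_card_eq
        Finset.subset_union_left htcard hbig
      have hwcl : (skel C).IsClique (↑w : Set V) :=
        hucl.subset (Finset.coe_subset.mpr hwu)
      exact hC w (hfc.2 w hwcl hwcard).1 t htw
    · push_neg at hbig
      have hcard_tH : (t \ H).card + H.card = u.card := by
        rw [hudef, ← Finset.sdiff_union_self_eq_union]
        exact (Finset.card_union_of_disjoint Finset.sdiff_disjoint).symm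
      have htHC : t \ H ∈ C := by
        rcases Nat.lt_or_ge (t \ H).card 1 with h1 | h1
        · have he : t \ H = ∅ := Finset.card_eq_zero.mp (show (t \ H).card = 0 by omega)
          rw [he]; exact hemptyC
        rcases Nat.lt_or_ge (t \ H).card 2 with h2 | h2
        · obtain ⟨x, hx⟩ := Finset.card_eq_one.mp (show (t \ H).card = 1 by omega)
          have hxm : x ∈ t \ H := by rw [hx]; exact Finset.mem_singleton_self x
          rw [hx]
          exact htv x (Finset.mem_sdiff.mp hxm).1
        · have h2' : (t \ H).card = 2 := by omega
          obtain ⟨x, y, hxy, hpair⟩ := Finset.card_eq_two.mp h2'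
          have hxm : x ∈ t \ H := by rw [hpair]; simp
          have hym : y ∈ t \ H := by rw [hpair]; simp
          have hadj := htcl (Finset.mem_coe.mpr (Finset.mem_sdiff.mp hxm).1)
            (Finset.mem_coe.mpr (Finset.mem_sdiff.mp hym).1) hxy
          rw [hpair]
          exact hadj.2
      obtain ⟨Fc, hFcfacet, hsubF⟩ := exists_facet C htHC
      have hFcard : Fc.card = d + 1 := hP Fc hFcfacet
      have hFC : Fc ∈ C := hFcfacet.1
      have hcardpad : d + 1 - u.card ≤ (Fc \ u).card := by
        have h1 : (Fc \ u).card + (Fc ∩ u).card = Fc.card :=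
          Finset.card_sdiff_add_card_inter Fc u
        have h2 : (Fc ∩ u).card ≤ u.card := Finset.card_le_card Finset.inter_subset_right
        omega
      obtain ⟨p, hpF, hpcard⟩ := Finset.exists_subset_card_eq hcardpad
      have hpFc : p ⊆ Fc := hpF.trans Finset.sdiff_subset
      have hdisj : Disjoint u p := (Finset.sdiff_disjoint.mono_left hpF).symm
      have hwcard : (u ∪ p).card = d + 1 := by
        rw [Finset.card_union_of_disjoint hdisj, hpcard]
        omega
      have hFCpair : ∀ x ∈ Fc, ∀ y ∈ Fc, x ≠ y → (skel C).Adj x y := by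
        intro x hx y hy hxy
        exact ⟨hxy, hC Fc hFC {x, y}
          (Finset.insert_subset hx (Finset.singleton_subset_iff.mpr hy))⟩
      have hadj_up : ∀ x ∈ u, ∀ y ∈ p, x ≠ y → (skel C).Adj x y := by
        intro x hx y hy hxy
        by_cases hxH : x ∈ H
        · exact hfc.1 x hxH y
            (hC Fc hFC {y} (Finset.singleton_subset_iff.mpr (hpFc hy)))
            (fun he => hxy he.symm)
        · have hxt : x ∈ t \ H :=
            Finset.mem_sdiff.mpr ⟨(Finset.mem_union.mp hx).resolve_right hxH, hxH⟩
          exact hFCpair x (hsubF hxt) y (hpFc hy) hxy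
      have hwcl : (skel C).IsClique (↑(u ∪ p) : Set V) := by
        intro x hx y hy hxy
        rw [Finset.mem_coe, Finset.mem_union] at hx hy
        rcases hx with hx | hx
        · rcases hy with hy | hy
          · exact hucl (Finset.mem_coe.mpr hx) (Finset.mem_coe.mpr hy) hxy
          · exact hadj_up x hx y hy hxy
        · rcases hy with hy | hy
          · exact (hadj_up y hy x hx hxy.symm).symm
          · exact hFCpair x (hpFc hx) y (hpFc hy) hxy
      exact hC _ (hfc.2 (u ∪ p) hwcl hwcard).1 t
        (Finset.subset_union_left.trans Finset.subset_union_left)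
  have hgenC : ∀ F : Finset V, (∃ s ∈ K, F ⊆ s) → ¬ (({a, b} : Finset V) ⊆ F) → F ∈ C := by
    rintro F ⟨s, hsK, hFs⟩ hne
    have hmiss : a ∉ F ∨ b ∉ F := by
      by_contra hcon
      push_neg at hcon
      exact hne (Finset.insert_subset hcon.1 (Finset.singleton_subset_iff.mpr hcon.2))
    apply hclaim F
    · intro x hx y hy hxy
      rw [Finset.mem_coe] at hx hy
      have hcl := ((hmemK s).mp hsK).1
      have hadj := hcl (Finset.mem_coe.mpr (hFs hx)) (Finset.mem_coe.mpr (hFs hy)) hxy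
      rcases (hGadj x y).mp hadj with h | h
      · exact h
      · exfalso
        rcases h with ⟨h1, h2⟩ | ⟨h1, h2⟩
        · rcases hmiss with h | h
          · exact h (h1 ▸ hx)
          · exact h (h2 ▸ hy)
        · rcases hmiss with h | h
          · exact h (h2 ▸ hy)
          · exact h (h1 ▸ hx)
    · exact fun v hv => hKvert s hsK v (hFs hv)
    · have hle := Finset.card_le_card hFs
      rw [((hmemK s).mp hsK).2.1] at hle
      exact hle
  have hdelD : del D {a, b} = C := by
    ext F
    simp only [del, Finset.mem_filter]
    constructor
    · rintro ⟨hFD, hne⟩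
      rcases (hmemD F).mp hFD with h | h
      · exact h
      · exact hgenC F h hne
    · intro hF
      exact ⟨(hmemD F).mpr (Or.inl hF), hCnoe F hF⟩
  have hDcard : ∀ F ∈ D, F.card ≤ d + 1 := by
    intro F hF
    rcases (hmemD F).mp hF with h | ⟨s, hsK, hFs⟩
    · obtain ⟨G, hGf, hFG⟩ := exists_facet C h
      calc F.card ≤ G.card := Finset.card_le_card hFG
        _ = d + 1 := hP G hGf
    · calc F.card ≤ s.card := Finset.card_le_card hFs
        _ = d + 1 := ((hmemK s).mp hsK).2.1
  have hKfacet : ∀ s ∈ K, IsFacet D s := by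
    intro s hsK
    refine ⟨(hmemD s).mpr (Or.inr ⟨s, hsK, subset_rfl⟩), ?_⟩
    intro G hG hsG
    exact Finset.eq_of_subset_of_card_le hsG
      (le_of_le_of_eq (hDcard G hG) ((hmemK s).mp hsK).2.1.symm)
  have hCfacetD : ∀ F, IsFacet C F → IsFacet D F := by
    intro F hF
    refine ⟨(hmemD F).mpr (Or.inl hF.1), ?_⟩
    intro G hG hFG
    exact Finset.eq_of_subset_of_card_le hFG
      (le_of_le_of_eq (hDcard G hG) (hP F hF).symm)
  have hDpure : IsPure D d := by
    intro F hFf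
    rcases (hmemD F).mp hFf.1 with h | ⟨s, hsK, hFs⟩
    · obtain ⟨G, hGf, hFG⟩ := exists_facet C h
      rw [hFf.2 G (hCfacetD G hGf).1 hFG]
      exact hP G hGf
    · rw [hFf.2 s (hKfacet s hsK).1 hFs]
      exact ((hmemK s).mp hsK).2.1
  have heD : ({a, b} : Finset V) ∈ D := (hmemD _).mpr (Or.inr ⟨s₀, hs₀K, heab⟩)
  have hskelD : ∀ x y : V, (skel D).Adj x y ↔ G'.Adj x y := by
    intro x y
    constructor
    · rintro ⟨hxy, hm⟩
      rcases (hmemD _).mp hm with h | ⟨s, hsK, hsub⟩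
      · exact (hGadj x y).mpr (Or.inl ⟨hxy, h⟩)
      · exact ((hmemK s).mp hsK).1
          (Finset.mem_coe.mpr (hsub (Finset.mem_insert_self _ _)))
          (Finset.mem_coe.mpr (hsub (by simp))) hxy
    · intro h
      refine ⟨h.ne, ?_⟩
      rcases (hGadj x y).mp h with h' | h'
      · exact (hmemD _).mpr (Or.inl h'.2)
      · refine (hmemD _).mpr (Or.inr ⟨s₀, hs₀K, ?_⟩)
        rcases h' with ⟨rfl, rfl⟩ | ⟨rfl, rfl⟩
        · exact heab
        · exact Finset.insert_subset hbs₀ (Finset.singleton_subset_iff.mpr has₀)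
  have hDvert : ∀ v : V, ({v} : Finset V) ∈ D → ({v} : Finset V) ∈ C := by
    intro v hv
    rcases (hmemD _).mp hv with h | ⟨s, hsK, hsub⟩
    · exact h
    · exact hKvert s hsK v (hsub (Finset.mem_singleton_self v))
  have hfcD : FullyConed D d H := by
    constructor
    · intro h hh v hv hvh
      have hadj := hfc.1 h hh v (hDvert v hv) hvh
      exact ⟨hadj.1, (hmemD _).mpr (Or.inl hadj.2)⟩
    · intro s hscl hscard
      have hscl' : G'.IsClique (↑s : Set V) := fun x hx y hy hxy =>
        (hskelD x y).mp (hscl hx hy hxy)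
      by_cases hsube : ({a, b} : Finset V) ⊆ s
      · exact hKfacet s ((hmemK s).mpr ⟨hscl', hscard, hsube⟩)
      · have hmiss : a ∉ s ∨ b ∉ s := by
          by_contra hcon
          push_neg at hcon
          exact hsube (Finset.insert_subset hcon.1 (Finset.singleton_subset_iff.mpr hcon.2))
        have hsclC : (skel C).IsClique (↑s : Set V) := by
          intro x hx y hy hxy
          rcases (hGadj x y).mp (hscl' hx hy hxy) with h | h
          · exact h
          · exfalso
            rcases h with ⟨h1, h2⟩ | ⟨h1, h2⟩
            · rcases hmiss with h | h
              · exact h (h1 ▸ Finset.mem_coe.mp hx)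
              · exact h (h2 ▸ Finset.mem_coe.mp hy)
            · rcases hmiss with h | h
              · exact h (h2 ▸ Finset.mem_coe.mp hy)
              · exact h (h1 ▸ Finset.mem_coe.mp hx)
        exact hCfacetD s (hfc.2 s hsclC hscard)
  set N := Finset.univ.filter (fun v => (skel C).Adj v a ∧ (skel C).Adj v b) with hNdef
  have hmemN : ∀ v : V, v ∈ N ↔ (skel C).Adj v a ∧ (skel C).Adj v b := by
    intro v; rw [hNdef]; simp
  have haN : a ∉ N := fun h => ((hmemN a).mp h).1.ne rfl
  have hbN : b ∉ N := fun h => hnot (((hmemN b).mp h).1.symm)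
  have hHN : H ⊆ N := by
    intro h hh
    have hha : h ≠ a := fun he => haH (he ▸ hh)
    have hhb : h ≠ b := fun he => hbH (he ▸ hh)
    exact (hmemN h).mpr ⟨hfc.1 h hh a haC (fun he => hha he.symm),
      hfc.1 h hh b hbC (fun he => hhb he.symm)⟩
  have hNvert : ∀ v ∈ N, ({v} : Finset V) ∈ C := by
    intro v hv
    exact hC _ ((hmemN v).mp hv).1.2 {v}
      (Finset.singleton_subset_iff.mpr (Finset.mem_insert_self _ _))
  have huniv' : ∀ h ∈ H, ∀ v ∈ N, v ≠ h → (skel C).Adj h v := by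
    intro h hh v hv hvh
    exact hfc.1 h hh v (hNvert v hv) hvh
  have hs₀N : s₀ \ {a, b} ⊆ N := by
    intro v hv
    rw [Finset.mem_sdiff, Finset.mem_insert, Finset.mem_singleton] at hv
    push_neg at hv
    refine (hmemN v).mpr ⟨?_, ?_⟩
    · have hadj := hs₀cl (Finset.mem_coe.mpr hv.1) (Finset.mem_coe.mpr has₀) hv.2.1
      rcases (hGadj v a).mp hadj with h | h
      · exact h
      · exfalso
        rcases h with ⟨h1, -⟩ | ⟨h1, -⟩
        · exact hv.2.1 h1
        · exact hv.2.2 h1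
    · have hadj := hs₀cl (Finset.mem_coe.mpr hv.1) (Finset.mem_coe.mpr hbs₀) hv.2.2
      rcases (hGadj v b).mp hadj with h | h
      · exact h
      · exfalso
        rcases h with ⟨h1, -⟩ | ⟨h1, -⟩
        · exact hv.2.1 h1
        · exact hv.2.2 h1
  have hNcard : d - 1 ≤ N.card := by
    have h1 : (s₀ \ {a, b}).card = d - 1 := by
      rw [Finset.card_sdiff_of_subset heab, Finset.card_pair hab, hs₀card]
      omega
    calc d - 1 = (s₀ \ {a, b}).card := h1.symm
      _ ≤ N.card := Finset.card_le_card hs₀N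
  have hlkeq : lk D {a, b} = trunc (skel C) N (d - 2) := by
    ext t
    simp only [lk, Finset.mem_filter, mem_trunc]
    constructor
    · rintro ⟨htD, hdisj, hun⟩
      have hta : a ∉ t := by
        intro h
        have hm : a ∈ t ∩ ({a, b} : Finset V) :=
          Finset.mem_inter.mpr ⟨h, Finset.mem_insert_self _ _⟩
        rw [hdisj] at hm
        exact absurd hm (Finset.notMem_empty a)
      have htb : b ∉ t := by
        intro h
        have hm : b ∈ t ∩ ({a, b} : Finset V) :=
          Finset.mem_inter.mpr ⟨h, by simp⟩
        rw [hdisj] at hm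
        exact absurd hm (Finset.notMem_empty b)
      obtain ⟨s, hsK, hsub⟩ : ∃ s ∈ K, t ∪ {a, b} ⊆ s := by
        rcases (hmemD _).mp hun with h | h
        · exact absurd Finset.subset_union_right (hCnoe _ h)
        · exact h
      obtain ⟨hscl, hscard, -⟩ := (hmemK s).mp hsK
      have hts : t ⊆ s := Finset.subset_union_left.trans hsub
      have has : a ∈ s := hsub (Finset.mem_union_right _ (Finset.mem_insert_self _ _))
      have hbs : b ∈ s := hsub (Finset.mem_union_right _ (by simp))
      refine ⟨?_, ?_, ?_⟩
      · intro v hv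
        have hva : v ≠ a := fun he => hta (he ▸ hv)
        have hvb : v ≠ b := fun he => htb (he ▸ hv)
        refine (hmemN v).mpr ⟨?_, ?_⟩
        · have hadj := hscl (Finset.mem_coe.mpr (hts hv)) (Finset.mem_coe.mpr has) hva
          rcases (hGadj v a).mp hadj with h | h
          · exact h
          · exfalso
            rcases h with ⟨h1, -⟩ | ⟨h1, -⟩
            · exact hva h1
            · exact hvb h1
        · have hadj := hscl (Finset.mem_coe.mpr (hts hv)) (Finset.mem_coe.mpr hbs) hvb
          rcases (hGadj v b).mp hadj with h | h
          · exact h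
          · exfalso
            rcases h with ⟨h1, -⟩ | ⟨h1, -⟩
            · exact hva h1
            · exact hvb h1
      · intro x hx y hy hxy
        have hxt : x ∈ t := Finset.mem_coe.mp hx
        have hyt : y ∈ t := Finset.mem_coe.mp hy
        have hadj := hscl (Finset.mem_coe.mpr (hts hxt)) (Finset.mem_coe.mpr (hts hyt)) hxy
        rcases (hGadj x y).mp hadj with h | h
        · exact h
        · exfalso
          rcases h with ⟨h1, -⟩ | ⟨h1, -⟩
          · exact hta (h1 ▸ hxt)
          · exact htb (h1 ▸ hxt)
      · have hdisj2 : Disjoint t ({a, b} : Finset V) := by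
          rw [Finset.disjoint_left]
          intro v hv
          simp only [Finset.mem_insert, Finset.mem_singleton]
          push_neg
          exact ⟨fun he => hta (he ▸ hv), fun he => htb (he ▸ hv)⟩
        have hle := Finset.card_le_card hsub
        rw [Finset.card_union_of_disjoint hdisj2, Finset.card_pair hab, hscard] at hle
        omega
    · rintro ⟨htN, htcl, htcard⟩
      obtain ⟨t', htt', ht'N, ht'cl, ht'card⟩ := clique_extend huniv' hHN
        (by omega : d - 2 ≤ H.card) (by omega : d - 2 + 1 ≤ N.card) t htN htcl htcard
      have ht'a : a ∉ t' := fun h => haN (ht'N h)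
      have ht'b : b ∉ t' := fun h => hbN (ht'N h)
      have hmemab : ∀ z, z ∈ ({a, b} : Finset V) → z = a ∨ z = b := by
        intro z hz; simpa using hz
      have hs'cl : G'.IsClique (↑(t' ∪ {a, b}) : Set V) := by
        intro x hx y hy hxy
        rw [Finset.mem_coe, Finset.mem_union] at hx hy
        rcases hx with hx | hx
        · rcases hy with hy | hy
          · exact (hGadj x y).mpr
              (Or.inl (ht'cl (Finset.mem_coe.mpr hx) (Finset.mem_coe.mpr hy) hxy))
          · rcases hmemab y hy with rfl | rfl
            · exact (hGadj x _).mpr (Or.inl ((hmemN x).mp (ht'N hx)).1)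
            · exact (hGadj x _).mpr (Or.inl ((hmemN x).mp (ht'N hx)).2)
        · rcases hy with hy | hy
          · rcases hmemab x hx with rfl | rfl
            · exact ((hGadj y _).mpr (Or.inl ((hmemN y).mp (ht'N hy)).1)).symm
            · exact ((hGadj y _).mpr (Or.inl ((hmemN y).mp (ht'N hy)).2)).symm
          · rcases hmemab x hx with rfl | rfl <;> rcases hmemab y hy with rfl | rfl
            · exact absurd rfl hxy
            · exact (hGadj _ _).mpr (Or.inr (Or.inl ⟨rfl, rfl⟩))
            · exact (hGadj _ _).mpr (Or.inr (Or.inr ⟨rfl, rfl⟩))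
            · exact absurd rfl hxy
      have hdisj2 : Disjoint t' ({a, b} : Finset V) := by
        rw [Finset.disjoint_left]
        intro v hv
        simp only [Finset.mem_insert, Finset.mem_singleton]
        push_neg
        exact ⟨fun he => ht'a (he ▸ hv), fun he => ht'b (he ▸ hv)⟩
      have hscard : (t' ∪ {a, b}).card = d + 1 := by
        rw [Finset.card_union_of_disjoint hdisj2, Finset.card_pair hab, ht'card]
        omega
      have hsK : t' ∪ {a, b} ∈ K :=
        (hmemK _).mpr ⟨hs'cl, hscard, Finset.subset_union_right⟩
      refine ⟨?_, ?_, ?_⟩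
      · exact (hmemD t).mpr (Or.inr ⟨t' ∪ {a, b}, hsK, htt'.trans Finset.subset_union_left⟩)
      · rw [Finset.eq_empty_iff_forall_notMem]
        intro v hv
        rw [Finset.mem_inter] at hv
        have hvN := htN hv.1
        rcases hmemab v hv.2 with rfl | rfl
        · exact haN hvN
        · exact hbN hvN
      · exact (hmemD _).mpr (Or.inr ⟨t' ∪ {a, b}, hsK,
          Finset.union_subset_union htt' subset_rfl⟩)
  have hlkDecomp : Decomp 1 (lk D {a, b}) := by
    rw [hlkeq]
    exact decomp_trunc N.card N H (d - 2) le_rfl huniv' hHN (by omega) (by omega)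
  have hShed : Shedding D d {a, b} := ⟨heD, hdelD.symm ▸ hP⟩
  have hDecompD : Decomp 1 D :=
    Decomp.shed 1 D {a, b} d heD ⟨a, Finset.mem_insert_self _ _⟩
      (le_of_eq (Finset.card_pair hab)) hDpure
      (hdelD.symm ▸ hP) (hdelD.symm ▸ hD) hlkDecomp
  exact ⟨hShed, hdelD, hDecompD, hDpure, hfcD, hskelD⟩
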